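/- Let H be a complex Hilbert space and S : H → H an isometry, and let (Ĥ₁, ι₁, Ŝ₁) and (Ĥ₂, ι₂, Ŝ₂) be two minimal unitary dilations of (H, S). Then there exists a unitary operator Φ : Ĥ₁ → Ĥ₂ such that Φ ∘ ι₁ = ι₂ and Φ ∘ Ŝ₁ = Ŝ₂ ∘ Φ. -/

import Mathlib

open Function

private lemma dense_forall {α : Type*} [TopologicalSpace α] {s : Set α} (hs : Dense s)
    {A : Set α} (hA : IsClosed A) (hsub : s ⊆ A) : ∀ y, y ∈ A :=
  fun y => hA.closure_subset_iff.mpr hsub (hs y)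

/-- One-directional construction: an intertwining linear isometry. -/
private lemma dilation_map
    {H : Type} [NormedAddCommGroup H] [InnerProductSpace ℂ H]
    (S : H →ₗᵢ[ℂ] H)
    {H₁ : Type} [NormedAddCommGroup H₁] [InnerProductSpace ℂ H₁]
    {H₂ : Type} [NormedAddCommGroup H₂] [InnerProductSpace ℂ H₂] [CompleteSpace H₂]
    (ι₁ : H →ₗᵢ[ℂ] H₁) (S₁ : H₁ ≃ₗᵢ[ℂ] H₁)
    (ι₂ : H →ₗᵢ[ℂ] H₂) (S₂ : H₂ ≃ₗᵢ[ℂ] H₂)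
    (hcov₁ : ∀ x : H, S₁ (ι₁ x) = ι₁ (S x))
    (hcov₂ : ∀ x : H, S₂ (ι₂ x) = ι₂ (S x))
    (hdense₁ : Dense (⋃ n : ℕ, (S₁.symm)^[n] '' Set.range ι₁)) :
    ∃ Φ : H₁ →ₗᵢ[ℂ] H₂,
      (∀ (n : ℕ) (x : H), Φ ((⇑S₁.symm)^[n] (ι₁ x)) = (⇑S₂.symm)^[n] (ι₂ x)) := by
  classical
  -- basic iterate lemmas
  have iter₁_add : ∀ (k : ℕ) (a b : H₁),
      (⇑S₁.symm)^[k] (a + b) = (⇑S₁.symm)^[k] a + (⇑S₁.symm)^[k] b := by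
    intro k; induction k with
    | zero => intro a b; simp
    | succ k ih => intro a b; simp [Function.iterate_succ_apply, map_add, ih]
  have iter₁_smul : ∀ (k : ℕ) (c : ℂ) (a : H₁),
      (⇑S₁.symm)^[k] (c • a) = c • (⇑S₁.symm)^[k] a := by
    intro k; induction k with
    | zero => intro c a; simp
    | succ k ih => intro c a; simp [Function.iterate_succ_apply, map_smul, ih]
  have iter₂_add : ∀ (k : ℕ) (a b : H₂),
      (⇑S₂.symm)^[k] (a + b) = (⇑S₂.symm)^[k] a + (⇑S₂.symm)^[k] b := by
    intro k; induction k with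
    | zero => intro a b; simp
    | succ k ih => intro a b; simp [Function.iterate_succ_apply, map_add, ih]
  have iter₂_smul : ∀ (k : ℕ) (c : ℂ) (a : H₂),
      (⇑S₂.symm)^[k] (c • a) = c • (⇑S₂.symm)^[k] a := by
    intro k; induction k with
    | zero => intro c a; simp
    | succ k ih => intro c a; simp [Function.iterate_succ_apply, map_smul, ih]
  have iter₁_norm : ∀ (k : ℕ) (a : H₁), ‖(⇑S₁.symm)^[k] a‖ = ‖a‖ := by
    intro k; induction k with
    | zero => intro a; simp
    | succ k ih => intro a; rw [Function.iterate_succ_apply, ih, S₁.symm.norm_map]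
  have iter₂_norm : ∀ (k : ℕ) (a : H₂), ‖(⇑S₂.symm)^[k] a‖ = ‖a‖ := by
    intro k; induction k with
    | zero => intro a; simp
    | succ k ih => intro a; rw [Function.iterate_succ_apply, ih, S₂.symm.norm_map]
  -- raising the level of a representation
  have raise₁ : ∀ (n k : ℕ) (x : H),
      (⇑S₁.symm)^[n + k] (ι₁ ((⇑S)^[k] x)) = (⇑S₁.symm)^[n] (ι₁ x) := by
    intro n k
    induction k generalizing n with
    | zero => intro x; simp
    | succ k ih =>
      intro x
      have h1 : n + (k + 1) = (n + 1) + k := by omega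
      rw [Function.iterate_succ_apply, h1, ih (n + 1) (S x),
        Function.iterate_succ_apply, ← hcov₁, S₁.symm_apply_apply]
  have raise₂ : ∀ (n k : ℕ) (x : H),
      (⇑S₂.symm)^[n + k] (ι₂ ((⇑S)^[k] x)) = (⇑S₂.symm)^[n] (ι₂ x) := by
    intro n k
    induction k generalizing n with
    | zero => intro x; simp
    | succ k ih =>
      intro x
      have h1 : n + (k + 1) = (n + 1) + k := by omega
      rw [Function.iterate_succ_apply, h1, ih (n + 1) (S x),
        Function.iterate_succ_apply, ← hcov₂, S₂.symm_apply_apply]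
  have inj₁ : ∀ k : ℕ, Function.Injective ((⇑S₁.symm)^[k]) := by
    intro k; exact Function.Injective.iterate S₁.symm.injective k
  -- well-definedness
  have welldef : ∀ (n m : ℕ) (x x' : H),
      (⇑S₁.symm)^[n] (ι₁ x) = (⇑S₁.symm)^[m] (ι₁ x') →
      (⇑S₂.symm)^[n] (ι₂ x) = (⇑S₂.symm)^[m] (ι₂ x') := by
    intro n m x x' h
    set k := max n m with hk
    have hn : n + (k - n) = k := by omega
    have hm : m + (k - m) = k := by omega
    have e1 := raise₁ n (k - n) x; rw [hn] at e1
    have e2 := raise₁ m (k - m) x'; rw [hm] at e2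
    have : ι₁ ((⇑S)^[k - n] x) = ι₁ ((⇑S)^[k - m] x') := inj₁ k (by rw [e1, e2, h])
    have hx : (⇑S)^[k - n] x = (⇑S)^[k - m] x' := ι₁.injective this
    have f1 := raise₂ n (k - n) x; rw [hn] at f1
    have f2 := raise₂ m (k - m) x'; rw [hm] at f2
    rw [← f1, ← f2, hx]
  -- the partially defined map
  set g : H₁ → H₂ := fun y =>
    if h : ∃ p : ℕ × H, (⇑S₁.symm)^[p.1] (ι₁ p.2) = y then
      (⇑S₂.symm)^[h.choose.1] (ι₂ h.choose.2) else 0 with hg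
  have g_spec : ∀ (n : ℕ) (x : H) (y : H₁), (⇑S₁.symm)^[n] (ι₁ x) = y →
      g y = (⇑S₂.symm)^[n] (ι₂ x) := by
    intro n x y hy
    have hex : ∃ p : ℕ × H, (⇑S₁.symm)^[p.1] (ι₁ p.2) = y := ⟨(n, x), hy⟩
    rw [hg]; simp only
    rw [dif_pos hex]
    exact welldef _ _ _ _ (hex.choose_spec.trans hy.symm)
  -- common representation at equal level
  have common : ∀ (y z : H₁),
      (∃ p : ℕ × H, (⇑S₁.symm)^[p.1] (ι₁ p.2) = y) →
      (∃ p : ℕ × H, (⇑S₁.symm)^[p.1] (ι₁ p.2) = z) →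
      ∃ (k : ℕ) (u v : H), (⇑S₁.symm)^[k] (ι₁ u) = y ∧ (⇑S₁.symm)^[k] (ι₁ v) = z := by
    rintro y z ⟨⟨n, x⟩, hy⟩ ⟨⟨m, x'⟩, hz⟩
    refine ⟨max n m, (⇑S)^[max n m - n] x, (⇑S)^[max n m - m] x', ?_, ?_⟩
    · have hn : n + (max n m - n) = max n m := by omega
      have h1 := raise₁ n (max n m - n) x; rw [hn] at h1; exact h1.trans hy
    · have hm : m + (max n m - m) = max n m := by omega
      have h1 := raise₁ m (max n m - m) x'; rw [hm] at h1; exact h1.trans hz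
  -- the dense submodule
  set Dset : Set H₁ := ⋃ n : ℕ, (S₁.symm)^[n] '' Set.range ι₁ with hDset
  have mem_iff : ∀ y : H₁, y ∈ Dset ↔ ∃ p : ℕ × H, (⇑S₁.symm)^[p.1] (ι₁ p.2) = y := by
    intro y
    constructor
    · intro hy
      rcases Set.mem_iUnion.1 hy with ⟨n, hx⟩
      rcases hx with ⟨w, ⟨x, rfl⟩, hw⟩
      exact ⟨(n, x), hw⟩
    · rintro ⟨⟨n, x⟩, h⟩
      exact Set.mem_iUnion.2 ⟨n, ⟨ι₁ x, ⟨x, rfl⟩, h⟩⟩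
  set D : Submodule ℂ H₁ := {
    carrier := Dset
    zero_mem' := (mem_iff 0).2 ⟨(0, 0), by simp⟩
    add_mem' := by
      intro y z hy hz
      rcases common y z ((mem_iff y).1 hy) ((mem_iff z).1 hz) with ⟨k, u, v, hu, hv⟩
      refine (mem_iff _).2 ⟨(k, u + v), ?_⟩
      simp only [map_add, iter₁_add, hu, hv]
    smul_mem' := by
      intro c y hy
      rcases (mem_iff y).1 hy with ⟨⟨n, x⟩, hx⟩
      refine (mem_iff _).2 ⟨(n, c • x), ?_⟩
      simp only [map_smul, iter₁_smul, hx] }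
    with hD
  -- the linear isometry on D
  have g_add : ∀ y z : D, g ((y : H₁) + z) = g y + g z := by
    rintro ⟨y, hy⟩ ⟨z, hz⟩
    rcases common y z ((mem_iff y).1 hy) ((mem_iff z).1 hz) with ⟨k, u, v, hu, hv⟩
    have hsum : (⇑S₁.symm)^[k] (ι₁ (u + v)) = y + z := by
      simp only [map_add, iter₁_add, hu, hv]
    rw [g_spec k u y hu, g_spec k v z hv, g_spec k (u + v) (y + z) hsum]
    simp only [map_add, iter₂_add]
  have g_smul : ∀ (c : ℂ) (y : D), g (c • (y : H₁)) = c • g y := by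
    rintro c ⟨y, hy⟩
    rcases (mem_iff y).1 hy with ⟨⟨n, x⟩, hx⟩
    have hs : (⇑S₁.symm)^[n] (ι₁ (c • x)) = c • y := by
      simp only [map_smul, iter₁_smul, hx]
    rw [g_spec n x y hx, g_spec n (c • x) (c • y) hs]
    simp only [map_smul, iter₂_smul]
  have g_norm : ∀ y : D, ‖g (y : H₁)‖ = ‖(y : H₁)‖ := by
    rintro ⟨y, hy⟩
    rcases (mem_iff y).1 hy with ⟨⟨n, x⟩, hx⟩
    rw [g_spec n x y hx]
    show ‖(⇑S₂.symm)^[n] (ι₂ x)‖ = ‖y‖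
    rw [← hx, iter₂_norm, iter₁_norm, ι₁.norm_map, ι₂.norm_map]
  set f : D →ₗᵢ[ℂ] H₂ :=
    { toFun := fun y => g (y : H₁)
      map_add' := g_add
      map_smul' := g_smul
      norm_map' := g_norm } with hf
  -- extend to all of H₁
  have hdr : DenseRange (⇑(D.subtypeL)) := by
    have : Set.range (⇑(D.subtypeL)) = Dset := Subtype.range_coe
    rw [DenseRange, this]
    exact hdense₁
  have hue : IsUniformInducing (⇑(D.subtypeL)) := isometry_subtype_coe.isUniformInducing
  set Φcl : H₁ →L[ℂ] H₂ :=
    ContinuousLinearMap.extend f.toContinuousLinearMap D.subtypeL with hΦcl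
  have hext : ∀ d : D, Φcl ((d : H₁)) = g ((d : H₁)) := by
    intro d
    exact ContinuousLinearMap.extend_eq f.toContinuousLinearMap hdr hue d
  have hΦnorm : ∀ y : H₁, ‖Φcl y‖ = ‖y‖ := by
    refine dense_forall hdense₁ (isClosed_eq (continuous_norm.comp Φcl.continuous)
      continuous_norm) ?_
    intro y hy
    show ‖Φcl y‖ = ‖y‖
    rw [hext ⟨y, hy⟩]
    exact g_norm ⟨y, hy⟩
  refine ⟨⟨Φcl.toLinearMap, hΦnorm⟩, ?_⟩
  intro n x
  have hmem : (⇑S₁.symm)^[n] (ι₁ x) ∈ Dset := (mem_iff _).2 ⟨(n, x), rfl⟩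
  have := hext ⟨(⇑S₁.symm)^[n] (ι₁ x), hmem⟩
  simp only [LinearIsometry.coe_mk, ContinuousLinearMap.coe_coe] at this ⊢
  rw [this, g_spec n x _ rfl]


/-- **Uniqueness of the minimal unitary dilation.**
Let `H` be a complex Hilbert space, `S : H → H` an isometry, and let
`(H₁, ι₁, S₁)` and `(H₂, ι₂, S₂)` be two minimal unitary dilations of `(H, S)`,
i.e. `ιⱼ` is a linear isometric embedding, `Sⱼ` is unitary, `Sⱼ ∘ ιⱼ = ιⱼ ∘ S`, and
`⋃_{n ≥ 0} Sⱼ⁻ⁿ(ιⱼ(H))` is dense.  Then there is a unitary `Φ : H₁ → H₂` with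
`Φ ∘ ι₁ = ι₂` and `Φ ∘ S₁ = S₂ ∘ Φ`. -/
theorem minimal_unitary_dilation_unique
    {H : Type} [NormedAddCommGroup H] [InnerProductSpace ℂ H] [CompleteSpace H]
    (S : H →ₗᵢ[ℂ] H)
    {H₁ : Type} [NormedAddCommGroup H₁] [InnerProductSpace ℂ H₁] [CompleteSpace H₁]
    {H₂ : Type} [NormedAddCommGroup H₂] [InnerProductSpace ℂ H₂] [CompleteSpace H₂]
    (ι₁ : H →ₗᵢ[ℂ] H₁) (S₁ : H₁ ≃ₗᵢ[ℂ] H₁)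
    (ι₂ : H →ₗᵢ[ℂ] H₂) (S₂ : H₂ ≃ₗᵢ[ℂ] H₂)
    (hcov₁ : ∀ x : H, S₁ (ι₁ x) = ι₁ (S x))
    (hdense₁ : Dense (⋃ n : ℕ, (S₁.symm)^[n] '' Set.range ι₁))
    (hcov₂ : ∀ x : H, S₂ (ι₂ x) = ι₂ (S x))
    (hdense₂ : Dense (⋃ n : ℕ, (S₂.symm)^[n] '' Set.range ι₂)) :
    ∃ Φ : H₁ ≃ₗᵢ[ℂ] H₂,
      (∀ x : H, Φ (ι₁ x) = ι₂ x) ∧ (∀ y : H₁, Φ (S₁ y) = S₂ (Φ y)) := by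
  obtain ⟨Φ, hΦ⟩ := dilation_map S ι₁ S₁ ι₂ S₂ hcov₁ hcov₂ hdense₁
  obtain ⟨Ψ, hΨ⟩ := dilation_map S ι₂ S₂ ι₁ S₁ hcov₂ hcov₁ hdense₂
  have hright : ∀ z : H₂, Φ (Ψ z) = z := by
    refine dense_forall hdense₂ (isClosed_eq (Φ.continuous.comp Ψ.continuous) continuous_id) ?_
    intro z hz
    rcases Set.mem_iUnion.1 hz with ⟨n, w, ⟨x, rfl⟩, hw⟩
    show Φ (Ψ z) = z
    rw [← hw, hΨ, hΦ]
  have hsurj : Function.Surjective Φ := fun z => ⟨Ψ z, hright z⟩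
  refine ⟨{ toLinearEquiv := LinearEquiv.ofBijective Φ.toLinearMap ⟨Φ.injective, hsurj⟩,
            norm_map' := Φ.norm_map }, ?_, ?_⟩
  · intro x
    have := hΦ 0 x
    simp at this; exact this
  · have key : ∀ y : H₁, Φ (S₁ y) = S₂ (Φ y) := by
      refine dense_forall hdense₁
        (isClosed_eq (Φ.continuous.comp S₁.continuous) (S₂.continuous.comp Φ.continuous)) ?_
      intro y hy
      rcases Set.mem_iUnion.1 hy with ⟨n, w, ⟨x, rfl⟩, hw⟩
      show Φ (S₁ y) = S₂ (Φ y)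
      rw [← hw]
      cases n with
      | zero =>
        simp only [Function.iterate_zero, id_eq]
        rw [hcov₁]
        have h0 : ∀ u : H, Φ (ι₁ u) = ι₂ u := by
          intro u; have := hΦ 0 u; simpa using this
        rw [h0, h0, hcov₂]
      | succ m =>
        rw [Function.iterate_succ_apply', S₁.apply_symm_apply]
        conv_rhs => rw [← Function.iterate_succ_apply' (⇑S₁.symm) m (ι₁ x)]
        rw [hΦ, hΦ, Function.iterate_succ_apply', S₂.apply_symm_apply]
    exact key
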